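/- Define for a solution φ of φ' + sin φ = f the complex function F(t) = Q(t) + i e^{-P(t)} where P(t) = ∫₀ᵗ cos φ, Q(t) = ∫₀ᵗ e^{-P} sin φ. Then F satisfies the ODE F'(t) = -i e^{iφ(t)} Im F(t) with initial condition F(0) = i. Conversely, any solution of this ODE with nonvanishing imaginary part arises this way. -/

import Mathlib

/-- For a solution `φ` of `φ' + sin φ = f`, the function
`F = Q + i e^{-P}` with `P = ∫₀ᵗ cos φ`, `Q = ∫₀ᵗ e^{-P} sin φ` satisfies
`F' = -i e^{iφ} Im F`, `F(0) = i`; conversely any solution of this ODE with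
`F(0) = i` and nonvanishing imaginary part arises this way. -/
theorem stmt4 (φ : ℝ → ℝ) :
    (∀ P Q : ℝ → ℝ,
      (∀ t, HasDerivAt P (Real.cos (φ t)) t) → P 0 = 0 →
      (∀ t, HasDerivAt Q (Real.exp (-P t) * Real.sin (φ t)) t) → Q 0 = 0 →
      (fun t : ℝ => (Q t : ℂ) + Complex.I * Complex.exp (-(P t : ℂ))) 0 = Complex.I ∧
      ∀ t, HasDerivAt (fun s : ℝ => (Q s : ℂ) + Complex.I * Complex.exp (-(P s : ℂ)))
        (-Complex.I * Complex.exp (Complex.I * φ t) *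
          (((Q t : ℂ) + Complex.I * Complex.exp (-(P t : ℂ))).im : ℂ)) t) ∧
    (∀ G : ℝ → ℂ,
      (∀ t, HasDerivAt G (-Complex.I * Complex.exp (Complex.I * φ t) * ((G t).im : ℂ)) t) →
      G 0 = Complex.I → (∀ t, (G t).im ≠ 0) →
      ∃ P Q : ℝ → ℝ,
        (∀ t, HasDerivAt P (Real.cos (φ t)) t) ∧ P 0 = 0 ∧
        (∀ t, HasDerivAt Q (Real.exp (-P t) * Real.sin (φ t)) t) ∧ Q 0 = 0 ∧
        ∀ t, G t = (Q t : ℂ) + Complex.I * Complex.exp (-(P t : ℂ))) := by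
  constructor
  · intro P Q hP hP0 hQ hQ0
    have hexp : ∀ t : ℝ, Complex.exp (-(P t : ℂ)) = ((Real.exp (-P t) : ℝ) : ℂ) := by
      intro t
      rw [Complex.ofReal_exp, Complex.ofReal_neg]
    refine ⟨by simp [hP0, hQ0], fun t => ?_⟩
    have h1 : HasDerivAt (fun s : ℝ => (Q s : ℂ))
        ((Real.exp (-P t) * Real.sin (φ t) : ℝ) : ℂ) t := (hQ t).ofReal_comp
    have h2 : HasDerivAt (fun s : ℝ => (-(P s : ℂ))) (-(Real.cos (φ t) : ℂ)) t :=
      ((hP t).ofReal_comp).neg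
    have h3 := (h2.cexp).const_mul Complex.I
    have h4 := h1.add h3
    convert h4 using 1
    case e'_4 => rfl
    case e'_8 => rfl
    rw [hexp, mul_comm Complex.I ((φ t : ℝ) : ℂ), Complex.exp_mul_I]
    have him : ((Q t : ℂ) + Complex.I * ((Real.exp (-P t) : ℝ) : ℂ)).im
        = Real.exp (-P t) := by simp [-Complex.ofReal_exp]
    rw [him, ← Complex.ofReal_cos, ← Complex.ofReal_sin]
    push_cast [-Complex.ofReal_exp]
    apply Complex.ext <;> simp [-Complex.ofReal_exp] <;> ring
  · intro G hG hG0 hGim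
    have hdiffG : Differentiable ℝ G := fun t => (hG t).differentiableAt
    have hcontim : Continuous fun t => (G t).im :=
      Complex.continuous_im.comp hdiffG.continuous
    have h0im : (G 0).im = 1 := by simp [hG0]
    have hpos : ∀ t, 0 < (G t).im := by
      intro t
      by_contra h
      push_neg at h
      have hlt : (G t).im < 0 := lt_of_le_of_ne h (hGim t)
      have hsub := intermediate_value_uIcc (a := (0:ℝ)) (b := t)
        (hcontim.continuousOn)
      have h0mem : (0:ℝ) ∈ Set.uIcc ((G 0).im) ((G t).im) := by
        rw [Set.mem_uIcc]
        right
        exact ⟨hlt.le, by rw [h0im]; norm_num⟩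
      obtain ⟨s, _, hs⟩ := hsub h0mem
      exact hGim s hs
    have hIm : ∀ t, HasDerivAt (fun s => (G s).im)
        (-Real.cos (φ t) * (G t).im) t := by
      intro t
      have := Complex.imCLM.hasFDerivAt.comp_hasDerivAt t (hG t)
      convert this using 1
      case e'_4 => rfl
      case e'_5 => rfl
      case e'_8 => rfl
      simp only [Complex.imCLM_apply]
      rw [mul_comm Complex.I ((φ t : ℝ) : ℂ), Complex.exp_mul_I]
      simp [← Complex.ofReal_cos, ← Complex.ofReal_sin]
    have hRe : ∀ t, HasDerivAt (fun s => (G s).re)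
        (Real.sin (φ t) * (G t).im) t := by
      intro t
      have := Complex.reCLM.hasFDerivAt.comp_hasDerivAt t (hG t)
      convert this using 1
      case e'_4 => rfl
      case e'_5 => rfl
      case e'_8 => rfl
      simp only [Complex.reCLM_apply]
      rw [mul_comm Complex.I ((φ t : ℝ) : ℂ), Complex.exp_mul_I]
      simp [← Complex.ofReal_cos, ← Complex.ofReal_sin]
    refine ⟨fun t => -Real.log ((G t).im), fun t => (G t).re, ?_, ?_, ?_, ?_, ?_⟩
    · intro t
      have := ((hIm t).log (hGim t)).neg
      convert this using 1
      case e'_4 => rfl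
      case e'_5 => rfl
      case e'_8 => rfl
      field_simp
      rw [mul_div_assoc, div_self (hGim t), mul_one]
    · simp [h0im]
    · intro t
      have := hRe t
      convert this using 1
      rw [neg_neg, Real.exp_log (hpos t)]
      ring
    · simp [hG0]
    · intro t
      show G t = ((G t).re : ℂ) + Complex.I * Complex.exp (-((-Real.log ((G t).im) : ℝ) : ℂ))
      rw [show (-((-Real.log ((G t).im) : ℝ) : ℂ)) = ((Real.log ((G t).im) : ℝ) : ℂ) by
        push_cast; ring, ← Complex.ofReal_exp, Real.exp_log (hpos t), mul_comm]
      exact (Complex.re_add_im (G t)).symm
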